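/- Let b ≥ 2 and let f : ℕ → Ω be a partial function defined and strictly increasing on [0, b). Define O_f^b : ℕ → ordinals by O_f^b(n) = f(n) if n < b, and O_f^b(n) = Ω^(O_f^b(e)) · f(a) + O_f^b(r) if n ≥ b, where n =_b b^e a + r is the b-decomposition. Then O_f^b is strictly increasing on ℕ. -/

import Mathlib

/-- `Ω`, the first uncountable ordinal. -/
noncomputable def Omega : Ordinal := (Cardinal.aleph 1).ord

/-- `n =_b b^e·a + r` is the `b`-decomposition of `n`. -/
def BDecomp (b n e a r : ℕ) : Prop :=
  n = b ^ e * a + r ∧ b ^ e ≤ n ∧ n < b ^ (e + 1) ∧ 0 < a ∧ a < b ∧ r < b ^ e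

/-- if `f` maps `[0,b)` strictly increasingly into `Ω`, then the
ordinal interpretation `O = O_f^b` (characterized by its defining recursion)
is strictly increasing on `ℕ`. -/
theorem stmt1 (b : ℕ) (hb : 2 ≤ b) (f : ℕ → Ordinal)
    (hfOm : ∀ n < b, f n < Omega)
    (hf : ∀ m n, m < n → n < b → f m < f n)
    (O : ℕ → Ordinal)
    (hOsmall : ∀ n < b, O n = f n)
    (hObig : ∀ n e a r, b ≤ n → BDecomp b n e a r →
      O n = Omega ^ O e * f a + O r) :
    StrictMono O := by
  have hb1 : 1 < b := hb
  have hΩpos : (0 : Ordinal) < Omega := by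
    have : (0 : Cardinal) < Cardinal.aleph 1 := Cardinal.aleph_pos 1
    simpa [Omega] using (Cardinal.ord_lt_ord.2 this)
  -- existence of the decomposition
  have hdec : ∀ n, b ≤ n → ∃ e a r, BDecomp b n e a r := by
    intro n hn
    have hn0 : n ≠ 0 := by omega
    refine ⟨Nat.log b n, n / b ^ Nat.log b n, n % b ^ Nat.log b n, ?_, ?_, ?_, ?_, ?_, ?_⟩
    · exact (Nat.div_add_mod n (b ^ Nat.log b n)).symm
    · exact Nat.pow_log_le_self b hn0
    · exact Nat.lt_pow_succ_log_self hb1 n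
    · exact Nat.div_pos (Nat.pow_log_le_self b hn0) (Nat.pow_pos (by omega))
    · have h := Nat.lt_pow_succ_log_self hb1 n
      rw [pow_succ] at h
      exact Nat.div_lt_of_lt_mul h
    · exact Nat.mod_lt _ (Nat.pow_pos (by omega))
  -- positivity of O on positive inputs
  have hOpos : ∀ e, 1 ≤ e → (1 : Ordinal) ≤ O e := by
    intro e he
    rcases lt_or_ge e b with heb | hbe
    · rw [hOsmall e heb]
      have : (0 : Ordinal) < f e := lt_of_le_of_lt zero_le (hf 0 e he heb)
      exact Order.one_le_iff_pos.2 this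
    · obtain ⟨e', a', r', hd⟩ := hdec e hbe
      obtain ⟨heq, hle, hlt, hapos, hab, hr⟩ := hd
      rw [hObig e e' a' r' hbe ⟨heq, hle, hlt, hapos, hab, hr⟩]
      have hfa : (1 : Ordinal) ≤ f a' := by
        have : (0 : Ordinal) < f a' := lt_of_le_of_lt zero_le (hf 0 a' hapos hab)
        exact Order.one_le_iff_pos.2 this
      calc (1 : Ordinal) ≤ f a' := hfa
        _ = 1 * f a' := (one_mul _).symm
        _ ≤ Omega ^ O e' * f a' := by
            exact mul_le_mul_left (Order.one_le_iff_pos.2 (Ordinal.opow_pos _ hΩpos)) _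
        _ ≤ Omega ^ O e' * f a' + O r' := le_self_add
  have hΩle : ∀ e, 1 ≤ e → Omega ≤ Omega ^ O e := by
    intro e he
    calc Omega = Omega ^ (1 : Ordinal) := (Ordinal.opow_one _).symm
      _ ≤ Omega ^ O e := Ordinal.opow_le_opow_right hΩpos (hOpos e he)
  -- exponent of a big number is positive
  have hepos : ∀ n e a r, b ≤ n → BDecomp b n e a r → 1 ≤ e := by
    intro n e a r hn hd
    by_contra h
    have he0 : e = 0 := by omega
    have := hd.2.2.1
    rw [he0] at this
    simp at this
    omega
  -- main induction
  have key : ∀ n, ∀ m, m < n → O m < O n := by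
    intro n
    induction n using Nat.strong_induction_on with
    | _ n IH =>
      -- bound lemma
      have bnd : ∀ k, k < n → ∀ e, 1 ≤ e → e < n → k < b ^ e → O k < Omega ^ O e := by
        intro k
        induction k using Nat.strong_induction_on with
        | _ k IHk =>
          intro hkn e he hen hke
          rcases lt_or_ge k b with hkb | hbk
          · rw [hOsmall k hkb]
            exact lt_of_lt_of_le (hfOm k hkb) (hΩle e he)
          · obtain ⟨e₀, a₀, r₀, hd⟩ := hdec k hbk
            obtain ⟨hkeq, hkle, hklt, ha₀pos, ha₀b, hr₀⟩ := hd
            have he₀1 : 1 ≤ e₀ := hepos k e₀ a₀ r₀ hbk ⟨hkeq, hkle, hklt, ha₀pos, ha₀b, hr₀⟩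
            have he₀e : e₀ < e := by
              have : b ^ e₀ < b ^ e := lt_of_le_of_lt hkle hke
              exact (Nat.pow_lt_pow_iff_right hb1).mp this
            have hr₀k : r₀ < k := lt_of_lt_of_le hr₀ hkle
            have h1 : O r₀ < Omega ^ O e₀ :=
              IHk r₀ hr₀k (lt_trans hr₀k hkn) e₀ he₀1 (lt_trans he₀e hen) hr₀
            have h2 : O e₀ < O e := IH e hen e₀ he₀e
            have hfa : f a₀ < Omega := hfOm a₀ ha₀b
            rw [hObig k e₀ a₀ r₀ hbk ⟨hkeq, hkle, hklt, ha₀pos, ha₀b, hr₀⟩]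
            calc Omega ^ O e₀ * f a₀ + O r₀
                < Omega ^ O e₀ * f a₀ + Omega ^ O e₀ := by
                  exact add_lt_add_right h1 _
              _ = Omega ^ O e₀ * (f a₀ + 1) := by rw [mul_add, mul_one]
              _ ≤ Omega ^ O e₀ * Omega := by
                  exact mul_le_mul_right (Order.add_one_le_iff.2 hfa) _
              _ = Omega ^ (O e₀ + 1) := by
                  rw [Ordinal.opow_add, Ordinal.opow_one]
              _ ≤ Omega ^ O e := Ordinal.opow_le_opow_right hΩpos (Order.add_one_le_iff.2 h2)
      -- the monotonicity step
      intro m hmn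
      rcases lt_or_ge n b with hnb | hbn
      · rw [hOsmall m (lt_trans hmn hnb), hOsmall n hnb]
        exact hf m n hmn hnb
      · obtain ⟨e₂, a₂, r₂, hd₂⟩ := hdec n hbn
        obtain ⟨hneq, hnle, hnlt, ha₂pos, ha₂b, hr₂⟩ := hd₂
        have he₂1 : 1 ≤ e₂ := hepos n e₂ a₂ r₂ hbn ⟨hneq, hnle, hnlt, ha₂pos, ha₂b, hr₂⟩
        have he₂n : e₂ < n := lt_of_lt_of_le (Nat.lt_pow_self (n := e₂) hb1) hnle
        have hfa₂ : (1 : Ordinal) ≤ f a₂ := by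
          have : (0 : Ordinal) < f a₂ := lt_of_le_of_lt zero_le (hf 0 a₂ ha₂pos ha₂b)
          exact Order.one_le_iff_pos.2 this
        have hprod : Omega ^ O e₂ ≤ Omega ^ O e₂ * f a₂ := by
          calc Omega ^ O e₂ = Omega ^ O e₂ * 1 := (mul_one _).symm
            _ ≤ Omega ^ O e₂ * f a₂ := mul_le_mul_right hfa₂ _
        rw [hObig n e₂ a₂ r₂ hbn ⟨hneq, hnle, hnlt, ha₂pos, ha₂b, hr₂⟩]
        rcases lt_or_ge m b with hmb | hbm
        · rw [hOsmall m hmb]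
          calc f m < Omega := hfOm m hmb
            _ ≤ Omega ^ O e₂ := hΩle e₂ he₂1
            _ ≤ Omega ^ O e₂ * f a₂ := hprod
            _ ≤ Omega ^ O e₂ * f a₂ + O r₂ := le_self_add
        · obtain ⟨e₁, a₁, r₁, hd₁⟩ := hdec m hbm
          obtain ⟨hmeq, hmle, hmlt, ha₁pos, ha₁b, hr₁⟩ := hd₁
          have he₁1 : 1 ≤ e₁ := hepos m e₁ a₁ r₁ hbm ⟨hmeq, hmle, hmlt, ha₁pos, ha₁b, hr₁⟩
          have he₁₂ : e₁ ≤ e₂ := by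
            have : b ^ e₁ < b ^ (e₂ + 1) := lt_of_le_of_lt (le_trans hmle (le_of_lt hmn)) hnlt
            have := (Nat.pow_lt_pow_iff_right hb1).mp this
            omega
          rw [hObig m e₁ a₁ r₁ hbm ⟨hmeq, hmle, hmlt, ha₁pos, ha₁b, hr₁⟩]
          have hbr₁ : O r₁ < Omega ^ O e₁ :=
            bnd r₁ (lt_trans (lt_of_lt_of_le hr₁ hmle) hmn) e₁ he₁1
              (lt_of_le_of_lt he₁₂ he₂n) hr₁
          rcases eq_or_lt_of_le he₁₂ with heq | hlt
          · -- same exponent: compare (a, r) lexicographically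
            subst heq
            rcases lt_trichotomy a₁ a₂ with ha | ha | ha
            · have hfstep : f a₁ + 1 ≤ f a₂ :=
                Order.add_one_le_iff.2 (hf a₁ a₂ ha ha₂b)
              calc Omega ^ O e₁ * f a₁ + O r₁
                  < Omega ^ O e₁ * f a₁ + Omega ^ O e₁ := add_lt_add_right hbr₁ _
                _ = Omega ^ O e₁ * (f a₁ + 1) := by rw [mul_add, mul_one]
                _ ≤ Omega ^ O e₁ * f a₂ := mul_le_mul_right hfstep _
                _ ≤ Omega ^ O e₁ * f a₂ + O r₂ := le_self_add
            · subst ha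
              have hrr : r₁ < r₂ := by omega
              have : O r₁ < O r₂ := IH r₂ (lt_of_lt_of_le hr₂ hnle) r₁ hrr
              exact add_lt_add_right this _
            · exfalso
              have h1 : b ^ e₁ * (a₂ + 1) ≤ b ^ e₁ * a₁ := Nat.mul_le_mul_left _ (by omega)
              have h2 : n < b ^ e₁ * (a₂ + 1) := by
                rw [Nat.mul_add, Nat.mul_one]
                omega
              omega
          · -- e₁ < e₂
            have h2 : O e₁ < O e₂ := IH e₂ he₂n e₁ hlt
            calc Omega ^ O e₁ * f a₁ + O r₁
                < Omega ^ O e₁ * f a₁ + Omega ^ O e₁ := add_lt_add_right hbr₁ _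
              _ = Omega ^ O e₁ * (f a₁ + 1) := by rw [mul_add, mul_one]
              _ ≤ Omega ^ O e₁ * Omega :=
                  mul_le_mul_right (Order.add_one_le_iff.2 (hfOm a₁ ha₁b)) _
              _ = Omega ^ (O e₁ + 1) := by rw [Ordinal.opow_add, Ordinal.opow_one]
              _ ≤ Omega ^ O e₂ :=
                  Ordinal.opow_le_opow_right hΩpos (Order.add_one_le_iff.2 h2)
              _ ≤ Omega ^ O e₂ * f a₂ := hprod
              _ ≤ Omega ^ O e₂ * f a₂ + O r₂ := le_self_add
  exact fun m n h => key n m h
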